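/- arXiv:2202.10530 — 2 statements merged into one kernel-verified Lean document; each statement's English description precedes it below -/
import Mathlib

section
/- Let D be a positive integer, let C = (ζ, r̂, r) ∈ S_D, and let α ∈ K be such that ι(α) does not lie on C. Set d = √|Δ| · N((α, 1)) / √D, where N((α, 1)) is the absolute norm of the fractional ideal (α, 1). Then every point z ∈ ℂ lying on C satisfies |z − ι(α)| ≥ (√2 − 1)·min(d, √(d/|r|)) if r ≠ 0, and |z − ι(α)| ≥ (√2 − 1)·d if r = 0. -/
open Complex NumberField ComplexConjugate
open scoped nonZeroDivisors

noncomputable section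

/-- `i·√t` for a real number `t` (so `isqrt |Δ| = √Δ` and `isqrt D = i√D`). -/
def isqrt (t : ℝ) : ℂ := Complex.I * Real.sqrt t

/-- `(ζ, r̂, r)` is an oriented circle: `|ζ|² - r̂·r = 1`. -/
def IsOrientedCircle (ζ : ℂ) (rhat r : ℝ) : Prop :=
  Complex.normSq ζ - rhat * r = 1

/-- The point `z ∈ ℂ` lies on the oriented circle `(ζ, r̂, r)`:
`r·|z|² - 2·Re(conj z · ζ) + r̂ = 0`. -/
def LiesOn (z : ℂ) (ζ : ℂ) (rhat r : ℝ) : Prop :=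
  r * Complex.normSq z - 2 * (conj z * ζ).re + rhat = 0

/-- Membership of the oriented circle `(ζ, r̂, r)` in the arrangement `S_D`:
`i√D·ζ ∈ ι(𝒪)` and `i√D·r̂, i√D·r ∈ √Δ·ℤ`, where `√Δ = i√|Δ|`. -/
def MemSD (K : Type*) [Field K] [NumberField K] (ι : K →+* ℂ) (D : ℝ)
    (ζ : ℂ) (rhat r : ℝ) : Prop :=
  IsOrientedCircle ζ rhat r ∧
  (∃ a : 𝓞 K, ι (a : K) = isqrt D * ζ) ∧
  (∃ m : ℤ, isqrt D * (rhat : ℂ) = isqrt |(NumberField.discr K : ℝ)| * (m : ℂ)) ∧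
  (∃ m : ℤ, isqrt D * (r : ℂ) = isqrt |(NumberField.discr K : ℝ)| * (m : ℂ))

/-- The Minkowski pairing `⟨v_C, v_C'⟩_Q` of two oriented circles, a real number. -/
def pairingQ (ζ : ℂ) (rhat r : ℝ) (ζ' : ℂ) (rhat' r' : ℝ) : ℝ :=
  ((ζ * conj ζ' + conj ζ * ζ').re - rhat * r' - r * rhat') / 2

/-- The spin matrix `N(M)` of `M = [[α, γ], [β, δ]]`. -/
def spin (α β γ δ : ℂ) : Matrix (Fin 4) (Fin 4) ℂ :=
  !![α * conj δ, β * conj γ, α * conj γ, β * conj δ;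
     conj β * γ, conj α * δ, conj α * γ, conj β * δ;
     α * conj β, conj α * β, (Complex.normSq α : ℂ), (Complex.normSq β : ℂ);
     γ * conj δ, conj γ * δ, (Complex.normSq γ : ℂ), (Complex.normSq δ : ℂ)]

/-- The row vector `v_C = [ζ, conj ζ, r̂, r]` associated to an oriented circle. -/
def vC (ζ : ℂ) (rhat r : ℝ) : Fin 4 → ℂ := ![ζ, conj ζ, (rhat : ℂ), (r : ℂ)]

/-- The fractional ideal of `K` generated by two elements. -/
def gen2 (K : Type*) [Field K] [NumberField K] (x y : K) :
    FractionalIdeal (𝓞 K)⁰ K :=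
  FractionalIdeal.spanSingleton (𝓞 K)⁰ x + FractionalIdeal.spanSingleton (𝓞 K)⁰ y

/-- The fractional ideal of `K` generated by four elements (e.g. the entries of a
`2×2` matrix). -/
def gen4 (K : Type*) [Field K] [NumberField K] (a b c d : K) :
    FractionalIdeal (𝓞 K)⁰ K :=
  FractionalIdeal.spanSingleton (𝓞 K)⁰ a + FractionalIdeal.spanSingleton (𝓞 K)⁰ b +
    FractionalIdeal.spanSingleton (𝓞 K)⁰ c + FractionalIdeal.spanSingleton (𝓞 K)⁰ d

/-- The class of a fractional ideal in the class group of `K`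
(junk value `1` for the zero ideal). -/
def classOf (K : Type*) [Field K] [NumberField K]
    (I : FractionalIdeal (𝓞 K)⁰ K) : ClassGroup (𝓞 K) :=
  letI := Classical.dec (I = 0)
  if h : I = 0 then 1 else ClassGroup.mk K (Units.mk0 I h)

lemma isqrt_sq {t : ℝ} (ht : 0 ≤ t) : isqrt t ^ 2 = -t := by
  simp [isqrt, mul_pow, Complex.I_sq, ← Complex.ofReal_pow, Real.sq_sqrt ht]

lemma conj_isqrt (t : ℝ) : conj (isqrt t) = -isqrt t := by
  simp [isqrt]

section Aux
variable {K : Type*} [Field K] [NumberField K]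
open scoped Classical

def conjEmb (ι : K →+* ℂ) : K →+* ℂ := (starRingEnd ℂ).comp ι

lemma conjEmb_ne (ι : K →+* ℂ) (him : ∃ x : K, (ι x).im ≠ 0) : ι ≠ conjEmb ι := by
  obtain ⟨x, hx⟩ := him
  intro h
  apply hx
  have := congrArg (fun f : K →+* ℂ => (f x).im) h
  simp only [conjEmb, RingHom.comp_apply, Complex.conj_im] at this
  linarith

lemma univ_algHom (ι : K →+* ℂ) (hdeg : Module.finrank ℚ K = 2)
    (him : ∃ x : K, (ι x).im ≠ 0) :
    (Finset.univ : Finset (K →ₐ[ℚ] ℂ)) =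
      {RingHom.equivRatAlgHom K ℂ ι, RingHom.equivRatAlgHom K ℂ (conjEmb ι)} := by
  have hne : (RingHom.equivRatAlgHom K ℂ ι : K →ₐ[ℚ] ℂ) ≠ RingHom.equivRatAlgHom K ℂ (conjEmb ι) :=
    fun h => conjEmb_ne ι him ((RingHom.equivRatAlgHom K ℂ).injective h)
  have hcard : Fintype.card (K →ₐ[ℚ] ℂ) = 2 := by
    rw [Fintype.card_congr (RingHom.equivRatAlgHom K ℂ).symm, NumberField.Embeddings.card K ℂ, hdeg]
  symm
  apply Finset.eq_of_subset_of_card_le (Finset.subset_univ _)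
  rw [Finset.card_univ, hcard, Finset.card_insert_of_notMem (by simpa using hne),
    Finset.card_singleton]

lemma norm_eq_mul_conj (ι : K →+* ℂ) (hdeg : Module.finrank ℚ K = 2)
    (him : ∃ x : K, (ι x).im ≠ 0) (x : K) :
    ((Algebra.norm ℚ x : ℚ) : ℂ) = ι x * conj (ι x) := by
  have hne : (RingHom.equivRatAlgHom K ℂ ι : K →ₐ[ℚ] ℂ) ≠ RingHom.equivRatAlgHom K ℂ (conjEmb ι) :=
    fun h => conjEmb_ne ι him ((RingHom.equivRatAlgHom K ℂ).injective h)
  have h := Algebra.norm_eq_prod_embeddings ℚ ℂ x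
  rw [show (algebraMap ℚ ℂ) (Algebra.norm ℚ x) = ((Algebra.norm ℚ x : ℚ) : ℂ) from rfl] at h
  rw [h, univ_algHom ι hdeg him, Finset.prod_pair hne]
  rfl

lemma sub_conj_eq_isqrt_mul_int (ι : K →+* ℂ) (hdeg : Module.finrank ℚ K = 2)
    (him : ∃ x : K, (ι x).im ≠ 0) (hΔ : NumberField.discr K < 0) (β c : 𝓞 K) :
    ∃ y : ℤ, ι (β : K) * conj (ι (c : K)) - conj (ι (β : K)) * ι (c : K) =
      isqrt |(NumberField.discr K : ℝ)| * y := by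
  have hcard : Fintype.card (Module.Free.ChooseBasisIndex ℤ (𝓞 K)) = 2 := by
    rw [← Module.finrank_eq_card_chooseBasisIndex, NumberField.RingOfIntegers.rank, hdeg]
  let e2 : Module.Free.ChooseBasisIndex ℤ (𝓞 K) ≃ Fin 2 := Fintype.equivFinOfCardEq hcard
  let b : Module.Basis (Fin 2) ℤ (𝓞 K) := (NumberField.RingOfIntegers.basis K).reindex e2
  let bQ : Module.Basis (Fin 2) ℚ K := (NumberField.integralBasis K).reindex e2
  have hbQ : ∀ i, bQ i = algebraMap (𝓞 K) K (b i) := by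
    intro i
    simp [bQ, b, Module.Basis.reindex_apply, NumberField.integralBasis_apply]
  have hdisc : (NumberField.discr K : ℚ) = Algebra.discr ℚ bQ := by
    rw [NumberField.coe_discr]
    rw [show (bQ : Fin 2 → K) = (NumberField.integralBasis K) ∘ e2.symm from
      Module.Basis.coe_reindex _ _]
    rw [Algebra.discr_reindex]
  have hne : (RingHom.equivRatAlgHom K ℂ ι : K →ₐ[ℚ] ℂ) ≠ RingHom.equivRatAlgHom K ℂ (conjEmb ι) :=
    fun h => conjEmb_ne ι him ((RingHom.equivRatAlgHom K ℂ).injective h)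
  have hcardA : Fintype.card (K →ₐ[ℚ] ℂ) = 2 := by
    rw [Fintype.card_congr (RingHom.equivRatAlgHom K ℂ).symm, NumberField.Embeddings.card K ℂ, hdeg]
  let v : Fin 2 → (K →ₐ[ℚ] ℂ) := ![RingHom.equivRatAlgHom K ℂ ι, RingHom.equivRatAlgHom K ℂ (conjEmb ι)]
  have hvinj : Function.Injective v := by
    intro i j hij
    fin_cases i <;> fin_cases j <;> simp_all [v]
  let eAH : Fin 2 ≃ (K →ₐ[ℚ] ℂ) :=
    Equiv.ofBijective v ((Fintype.bijective_iff_injective_and_card v).mpr ⟨hvinj, by simp [hcardA]⟩)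
  set G : ℂ := ι (b 0 : K) * conj (ι (b 1 : K)) - conj (ι (b 0 : K)) * ι (b 1 : K) with hGdef
  have hG2 : G ^ 2 = ((NumberField.discr K : ℝ) : ℂ) := by
    have hthis := Algebra.discr_eq_det_embeddingsMatrixReindex_pow_two ℚ ℂ bQ eAH
    rw [← hdisc] at hthis
    have h00 : Algebra.embeddingsMatrixReindex ℚ ℂ bQ eAH 0 0 = ι (b 0 : K) := by
      simp [Algebra.embeddingsMatrixReindex, Algebra.embeddingsMatrix, eAH, Equiv.ofBijective,
        v, hbQ, RingHom.equivRatAlgHom_apply]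
    have h01 : Algebra.embeddingsMatrixReindex ℚ ℂ bQ eAH 0 1 = conj (ι (b 0 : K)) := by
      simp [Algebra.embeddingsMatrixReindex, Algebra.embeddingsMatrix, eAH, Equiv.ofBijective,
        v, hbQ, RingHom.equivRatAlgHom_apply]
      rfl
    have h10 : Algebra.embeddingsMatrixReindex ℚ ℂ bQ eAH 1 0 = ι (b 1 : K) := by
      simp [Algebra.embeddingsMatrixReindex, Algebra.embeddingsMatrix, eAH, Equiv.ofBijective,
        v, hbQ, RingHom.equivRatAlgHom_apply]
    have h11 : Algebra.embeddingsMatrixReindex ℚ ℂ bQ eAH 1 1 = conj (ι (b 1 : K)) := by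
      simp [Algebra.embeddingsMatrixReindex, Algebra.embeddingsMatrix, eAH, Equiv.ofBijective,
        v, hbQ, RingHom.equivRatAlgHom_apply]
      rfl
    have hdet : (Algebra.embeddingsMatrixReindex ℚ ℂ bQ eAH).det = G := by
      rw [Matrix.det_fin_two, h00, h01, h10, h11, hGdef]
    rw [hdet] at hthis
    rw [← hthis, eq_ratCast (algebraMap ℚ ℂ)]
    push_cast
    ring
  set s : ℂ := isqrt |(NumberField.discr K : ℝ)| with hsdef
  have hs2 : s ^ 2 = ((NumberField.discr K : ℝ) : ℂ) := by
    rw [hsdef, isqrt_sq (abs_nonneg _)]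
    have : |(NumberField.discr K : ℝ)| = -(NumberField.discr K : ℝ) := by
      rw [abs_of_nonpos]
      exact_mod_cast hΔ.le
    rw [this]
    push_cast
    ring
  have hGs : G = s ∨ G = -s := by
    have hmul : (G - s) * (G + s) = 0 := by
      have : G ^ 2 = s ^ 2 := by rw [hG2, hs2]
      linear_combination this
    rcases mul_eq_zero.mp hmul with h | h
    · left; linear_combination h
    · right; linear_combination h
  have hrep : ∀ γ : 𝓞 K, ι (γ : K) =
      ((b.repr γ 0 : ℤ) : ℂ) * ι (b 0 : K) + ((b.repr γ 1 : ℤ) : ℂ) * ι (b 1 : K) := by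
    intro γ
    have h := b.sum_repr γ
    rw [Fin.sum_univ_two] at h
    calc ι (γ : K) = ι ((((b.repr γ 0 • b 0 + b.repr γ 1 • b 1 : 𝓞 K)) : K)) := by rw [h]
    _ = _ := by
      push_cast [zsmul_eq_mul]
      simp [map_add, map_mul, map_intCast]
  have hrepc : ∀ γ : 𝓞 K, conj (ι (γ : K)) =
      ((b.repr γ 0 : ℤ) : ℂ) * conj (ι (b 0 : K)) + ((b.repr γ 1 : ℤ) : ℂ) * conj (ι (b 1 : K)) := by
    intro γ
    have := congrArg conj (hrep γ)
    simpa using this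
  rcases hGs with hG | hG
  · refine ⟨b.repr β 0 * b.repr c 1 - b.repr β 1 * b.repr c 0, ?_⟩
    rw [hrepc β, hrepc c, hrep β, hrep c, ← hG, hGdef]
    push_cast
    ring
  · refine ⟨b.repr β 1 * b.repr c 0 - b.repr β 0 * b.repr c 1, ?_⟩
    have hsG : s = -G := by rw [hG]; ring
    rw [hrepc β, hrepc c, hrep β, hrep c, hsG, hGdef]
    push_cast
    ring

lemma absNorm_facts (α : K) : ∃ (q : ℕ) (g : 𝓞 K) (k₁ : ℤ), q ≠ 0 ∧
    (algebraMap (𝓞 K) K g = (q : K) * α) ∧ ((Algebra.norm ℚ α) * q = (k₁ : ℚ)) ∧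
    (FractionalIdeal.absNorm (gen2 K α 1) = (q : ℚ)⁻¹) := by
  have h1 : (1 : K) ∈ gen2 K α 1 := by
    have h : FractionalIdeal.spanSingleton (𝓞 K)⁰ (1 : K) ≤ gen2 K α 1 := by
      unfold gen2; rw [← FractionalIdeal.sup_eq_add]; exact le_sup_right
    exact h (FractionalIdeal.mem_spanSingleton_self _ _)
  have hαmem : α ∈ gen2 K α 1 := by
    have h : FractionalIdeal.spanSingleton (𝓞 K)⁰ α ≤ gen2 K α 1 := by
      unfold gen2; rw [← FractionalIdeal.sup_eq_add]; exact le_sup_left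
    exact h (FractionalIdeal.mem_spanSingleton_self _ _)
  set 𝔞 : FractionalIdeal (𝓞 K)⁰ K := gen2 K α 1 with h𝔞
  have hane : 𝔞 ≠ 0 := by
    intro h
    rw [h] at h1
    simp at h1
  have hmulinv : 𝔞 * 𝔞⁻¹ = 1 := mul_inv_cancel₀ hane
  have hinvle : 𝔞⁻¹ ≤ 1 := by
    intro x hx
    have hx' : x ∈ 𝔞⁻¹ := hx
    rw [FractionalIdeal.mem_inv_iff hane] at hx'
    have h2 := hx' 1 h1
    rw [mul_one] at h2
    exact h2
  obtain ⟨J, hJ⟩ := FractionalIdeal.le_one_iff_exists_coeIdeal.mp hinvle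
  set q : ℕ := Ideal.absNorm J with hqdef
  have hJne : J ≠ 0 := by
    intro h
    rw [h] at hJ
    rw [← hJ] at hmulinv
    simp at hmulinv
  have hq0 : q ≠ 0 := by
    rw [hqdef, Ne, Ideal.absNorm_eq_zero_iff]
    exact hJne
  have hqmem : ((q : 𝓞 K)) ∈ J := Ideal.absNorm_mem J
  have hqinv : algebraMap (𝓞 K) K (q : 𝓞 K) ∈ 𝔞⁻¹ := by
    rw [← hJ]
    exact FractionalIdeal.mem_coeIdeal_of_mem _ hqmem
  have hmul : algebraMap (𝓞 K) K (q : 𝓞 K) * α ∈ (1 : FractionalIdeal (𝓞 K)⁰ K) := by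
    rw [← hmulinv, mul_comm]
    exact FractionalIdeal.mul_mem_mul hqinv hαmem
  obtain ⟨g, hg⟩ := (FractionalIdeal.mem_one_iff _).mp hmul
  have hspan : FractionalIdeal.spanSingleton (𝓞 K)⁰ α * (J : FractionalIdeal (𝓞 K)⁰ K) ≤ 1 := by
    rw [← hmulinv]
    refine FractionalIdeal.mul_le.mpr fun i hi j hj => ?_
    exact FractionalIdeal.mul_mem_mul (FractionalIdeal.spanSingleton_le_iff_mem.mpr hαmem hi)
      (hJ ▸ hj)
  obtain ⟨J', hJ'⟩ := FractionalIdeal.le_one_iff_exists_coeIdeal.mp hspan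
  have hnorm : |Algebra.norm ℚ α| * (q : ℚ) = (Ideal.absNorm J' : ℚ) := by
    have h := congrArg FractionalIdeal.absNorm hJ'
    rw [map_mul, FractionalIdeal.absNorm_span_singleton, FractionalIdeal.coeIdeal_absNorm,
      FractionalIdeal.coeIdeal_absNorm] at h
    exact h.symm
  have habs : FractionalIdeal.absNorm 𝔞 = (q : ℚ)⁻¹ := by
    have h := congrArg FractionalIdeal.absNorm hmulinv
    rw [map_mul, map_one, ← hJ, FractionalIdeal.coeIdeal_absNorm, ← hqdef] at h
    exact eq_inv_of_mul_eq_one_left h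
  have hgq : algebraMap (𝓞 K) K g = (q : K) * α := by
    rw [hg]
    push_cast
    ring
  have hk₁ : ∃ k₁ : ℤ, (Algebra.norm ℚ α) * (q : ℚ) = (k₁ : ℚ) := by
    rcases abs_cases (Algebra.norm ℚ α) with ⟨he, _⟩ | ⟨he, _⟩
    · exact ⟨Ideal.absNorm J', by rw [← he]; exact_mod_cast hnorm⟩
    · refine ⟨-(Ideal.absNorm J' : ℤ), ?_⟩
      push_cast
      rw [← hnorm, he]
      ring
  obtain ⟨k₁, hk₁⟩ := hk₁
  exact ⟨q, g, k₁, hq0, hgq, hk₁, habs⟩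

end Aux

set_option maxHeartbeats 1000000 in
theorem stmt_13 (K : Type*) [Field K] [NumberField K] (ι : K →+* ℂ)
    (hdeg : Module.finrank ℚ K = 2) (him : ∃ x : K, (ι x).im ≠ 0)
    (hΔ : NumberField.discr K < 0)
    (D : ℕ) (hD : 0 < D) (ζ : ℂ) (rhat r : ℝ) (hC : MemSD K ι D ζ rhat r)
    (α : K) (hα : ¬LiesOn (ι α) ζ rhat r) :
    let d : ℝ := Real.sqrt |(NumberField.discr K : ℝ)| *
      ((FractionalIdeal.absNorm (gen2 K α 1) : ℚ) : ℝ) / Real.sqrt D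
    ∀ z : ℂ, LiesOn z ζ rhat r →
      (r ≠ 0 → (Real.sqrt 2 - 1) * min d (Real.sqrt (d / |r|)) ≤ ‖z - ι α‖) ∧
      (r = 0 → (Real.sqrt 2 - 1) * d ≤ ‖z - ι α‖) := by
  intro d z hz
  obtain ⟨hcirc, ⟨a, ha⟩, ⟨n, hn⟩, ⟨m, hm⟩⟩ := hC
  obtain ⟨q, g, k₁, hq0, hgq, hk₁, habs⟩ := absNorm_facts α
  set f : ℝ := r * Complex.normSq (ι α) - 2 * (conj (ι α) * ζ).re + rhat with hfdef
  have hf0 : f ≠ 0 := hα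
  have hcirc' : Complex.normSq ζ - rhat * r = 1 := hcirc
  have hz' : r * Complex.normSq z - 2 * (conj z * ζ).re + rhat = 0 := hz
  -- basic positivity
  have hsD : 0 < Real.sqrt D := Real.sqrt_pos.mpr (by exact_mod_cast hD)
  have hΔne : 0 < |(NumberField.discr K : ℝ)| := by
    rw [abs_pos]
    exact_mod_cast hΔ.ne
  have hsΔ : 0 < Real.sqrt |(NumberField.discr K : ℝ)| := Real.sqrt_pos.mpr hΔne
  have hq1 : (1 : ℝ) ≤ (q : ℝ) := by exact_mod_cast Nat.one_le_iff_ne_zero.mpr hq0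
  have hdval : d = Real.sqrt |(NumberField.discr K : ℝ)| * ((q : ℝ))⁻¹ / Real.sqrt D := by
    show Real.sqrt _ * _ / _ = _
    rw [habs]
    push_cast
    ring
  have hd0 : 0 < d := by
    rw [hdval]
    positivity
  -- complex form of f
  have hιg : ι (g : K) = (q : ℂ) * ι α := by
    rw [show ((g : K)) = algebraMap (𝓞 K) K g from rfl, hgq]
    push_cast [map_mul]
    simp
  obtain ⟨y, hy⟩ := sub_conj_eq_isqrt_mul_int ι hdeg him hΔ g a
  have hy2 : ((q : ℂ) * ι α) * (-(isqrt D) * conj ζ) - ((q : ℂ) * conj (ι α)) * (isqrt D * ζ)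
      = isqrt |(NumberField.discr K : ℝ)| * y := by
    rw [← hy, hιg, ha]
    simp only [map_mul, conj_isqrt, map_natCast]
    try ring
  have hnormα := norm_eq_mul_conj ι hdeg him α
  have hqN : (q : ℂ) * (ι α * conj (ι α)) = (k₁ : ℂ) := by
    rw [← hnormα]
    have : ((Algebra.norm ℚ α * q : ℚ) : ℂ) = ((k₁ : ℚ) : ℂ) := by rw [hk₁]
    push_cast at this
    linear_combination this
  have hfC : ((f : ℝ) : ℂ) = (r : ℂ) * (ι α * conj (ι α)) - (conj (ι α) * ζ + ι α * conj ζ)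
      + (rhat : ℂ) := by
    have h1 : (Complex.normSq (ι α) : ℂ) = ι α * conj (ι α) := (Complex.mul_conj _).symm
    have h2 : conj (ι α) * ζ + conj (conj (ι α) * ζ) = (((2 * (conj (ι α) * ζ).re : ℝ)) : ℂ) := by
      rw [Complex.add_conj]
      try norm_cast
    rw [hfdef]
    push_cast
    rw [h1]
    simp only [map_mul, Complex.conj_conj] at h2
    push_cast at h2
    linear_combination h2
  set k : ℤ := m * k₁ + y + n * q with hkdef
  have hkey : (q : ℂ) * isqrt D * ((f : ℝ) : ℂ)
      = isqrt |(NumberField.discr K : ℝ)| * (k : ℂ) := by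
    rw [hkdef]
    push_cast
    linear_combination (q : ℂ) * isqrt D * hfC + (q : ℂ) * (ι α * conj (ι α)) * hm
      + isqrt |(NumberField.discr K : ℝ)| * (m : ℂ) * hqN + hy2 + (q : ℂ) * hn
  -- extract real equation
  have hrealC : (((q : ℝ) * Real.sqrt D * f : ℝ) : ℂ) =
      ((Real.sqrt |(NumberField.discr K : ℝ)| * (k : ℝ) : ℝ) : ℂ) := by
    apply mul_left_cancel₀ Complex.I_ne_zero
    simp only [isqrt] at hkey
    push_cast
    push_cast at hkey
    linear_combination hkey
  have hreal : (q : ℝ) * Real.sqrt D * f = Real.sqrt |(NumberField.discr K : ℝ)| * (k : ℝ) :=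
    Complex.ofReal_inj.mp hrealC
  have hk0 : k ≠ 0 := by
    intro h
    rw [h] at hreal
    simp only [Int.cast_zero, mul_zero] at hreal
    have : (q : ℝ) * Real.sqrt D * f ≠ 0 :=
      mul_ne_zero (mul_ne_zero (by exact_mod_cast hq0) hsD.ne') hf0
    exact this hreal
  have hk1 : (1 : ℝ) ≤ |(k : ℝ)| := by
    have := Int.one_le_abs hk0
    calc (1 : ℝ) ≤ (|k| : ℤ) := by exact_mod_cast this
    _ = |(k : ℝ)| := by push_cast; ring
  -- the key lower bound : d ≤ |f|
  have hfd : d ≤ |f| := by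
    have h1 : (q : ℝ) * Real.sqrt D * |f| = Real.sqrt |(NumberField.discr K : ℝ)| * |(k : ℝ)| := by
      have h2 := congrArg (fun t : ℝ => |t|) hreal
      rwa [abs_mul, abs_mul, abs_mul, _root_.abs_of_nonneg (by positivity : (0:ℝ) ≤ (q:ℝ)),
        _root_.abs_of_nonneg hsD.le, _root_.abs_of_nonneg hsΔ.le] at h2
    have hqD : (0 : ℝ) < (q : ℝ) * Real.sqrt D := by positivity
    have hdq : d * ((q : ℝ) * Real.sqrt D) = Real.sqrt |(NumberField.discr K : ℝ)| := by
      rw [hdval]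
      field_simp
    nlinarith [h1, hdq, mul_le_mul_of_nonneg_left hk1 hsΔ.le, hqD]
  -- geometry
  set δ : ℝ := ‖z - ι α‖ with hδdef
  have hδ0 : 0 ≤ δ := norm_nonneg _
  have hrz1 : ‖(r : ℂ) * z - ζ‖ = 1 := by
    have hns : Complex.normSq ((r : ℂ) * z - ζ) = 1 := by
      have e1 : ((Complex.normSq ((r : ℂ) * z - ζ) : ℝ) : ℂ)
          = ((r : ℂ) * z - ζ) * conj ((r : ℂ) * z - ζ) := (Complex.mul_conj _).symm
      have e2 : ((r : ℂ) * z - ζ) * conj ((r : ℂ) * z - ζ)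
          = (r : ℂ) * ((r : ℂ) * (z * conj z) - (conj z * ζ + z * conj ζ) + (rhat : ℂ))
            + ((Complex.normSq ζ : ℝ) : ℂ) - (r : ℂ) * (rhat : ℂ) := by
        rw [show ((Complex.normSq ζ : ℝ) : ℂ) = ζ * conj ζ from (Complex.mul_conj _).symm]
        simp only [map_sub, map_mul, Complex.conj_ofReal]
        ring
      have hzC : (r : ℂ) * (z * conj z) - (conj z * ζ + z * conj ζ) + (rhat : ℂ) = 0 := by
        have hnz : (Complex.normSq z : ℂ) = z * conj z := (Complex.mul_conj _).symm
        have h2 : conj z * ζ + conj (conj z * ζ) = (((2 * (conj z * ζ).re : ℝ)) : ℂ) := by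
          rw [Complex.add_conj]
          try norm_cast
        simp only [map_mul, Complex.conj_conj] at h2
        have hz'' : ((r * Complex.normSq z - 2 * (conj z * ζ).re + rhat : ℝ) : ℂ) = 0 := by
          rw [hz']
          simp
        push_cast at hz'' h2 ⊢
        rw [hnz] at hz''
        linear_combination hz'' - h2
      have : ((Complex.normSq ((r : ℂ) * z - ζ) : ℝ) : ℂ) = ((1 : ℝ) : ℂ) := by
        rw [e1, e2, hzC]
        have : ((Complex.normSq ζ - rhat * r : ℝ) : ℂ) = ((1 : ℝ) : ℂ) := by rw [hcirc']
        push_cast at this ⊢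
        linear_combination this
      exact_mod_cast this
    have h := Complex.sq_norm ((r : ℂ) * z - ζ)
    nlinarith [norm_nonneg ((r : ℂ) * z - ζ)]
  have habsf : |f| ≤ |r| * δ ^ 2 + 2 * δ := by
    set w : ℂ := ι α - z with hwdef
    have hww : ‖w‖ = δ := by
      rw [hδdef, hwdef, ← norm_neg]
      congr 1
      ring
    have hwC : ((f : ℝ) : ℂ) = (r : ℂ) * (w * conj w) + w * conj ((r : ℂ) * z - ζ)
        + conj w * ((r : ℂ) * z - ζ) := by
      have hzC : (r : ℂ) * (z * conj z) - (conj z * ζ + z * conj ζ) + (rhat : ℂ) = 0 := by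
        have hnz : (Complex.normSq z : ℂ) = z * conj z := (Complex.mul_conj _).symm
        have h2 : conj z * ζ + conj (conj z * ζ) = (((2 * (conj z * ζ).re : ℝ)) : ℂ) := by
          rw [Complex.add_conj]
          try norm_cast
        simp only [map_mul, Complex.conj_conj] at h2
        have hz'' : ((r * Complex.normSq z - 2 * (conj z * ζ).re + rhat : ℝ) : ℂ) = 0 := by
          rw [hz']
          simp
        push_cast at hz'' h2 ⊢
        rw [hnz] at hz''
        linear_combination hz'' - h2
      rw [hwdef]
      simp only [map_sub, map_mul, Complex.conj_ofReal]
      rw [hfC]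
      linear_combination hzC
    have h1 : |f| = ‖((f : ℝ) : ℂ)‖ := by rw [Complex.norm_real, Real.norm_eq_abs]
    rw [h1, hwC]
    calc ‖(r : ℂ) * (w * conj w) + w * conj ((r : ℂ) * z - ζ)
        + conj w * ((r : ℂ) * z - ζ)‖
        ≤ ‖(r : ℂ) * (w * conj w) + w * conj ((r : ℂ) * z - ζ)‖
          + ‖conj w * ((r : ℂ) * z - ζ)‖ := norm_add_le _ _
      _ ≤ ‖(r : ℂ) * (w * conj w)‖ + ‖w * conj ((r : ℂ) * z - ζ)‖
          + ‖conj w * ((r : ℂ) * z - ζ)‖ := by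
          have := norm_add_le ((r : ℂ) * (w * conj w)) (w * conj ((r : ℂ) * z - ζ))
          linarith
      _ = |r| * δ ^ 2 + 2 * δ := by
          simp only [norm_mul, Complex.norm_conj, Complex.norm_real, Real.norm_eq_abs, hrz1, hww]
          ring
  -- conclusion
  have hcore : d ≤ |r| * δ ^ 2 + 2 * δ := hfd.trans habsf
  constructor
  · -- r ≠ 0
    intro hr
    by_contra hlt
    push_neg at hlt
    set c : ℝ := Real.sqrt 2 - 1 with hcdef
    have hs2 : Real.sqrt 2 ^ 2 = 2 := Real.sq_sqrt (by norm_num)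
    have hc0 : 0 < c := by
      rw [hcdef]
      nlinarith [Real.sqrt_nonneg 2]
    have hcc : c ^ 2 + 2 * c = 1 := by
      rw [hcdef]
      nlinarith [Real.sqrt_nonneg 2]
    have hrpos : 0 < |r| := abs_pos.mpr hr
    have hlt1 : δ < c * d := lt_of_lt_of_le hlt (by
      have := min_le_left d (Real.sqrt (d / |r|))
      nlinarith)
    have hlt2 : δ < c * Real.sqrt (d / |r|) := lt_of_lt_of_le hlt (by
      have := min_le_right d (Real.sqrt (d / |r|))
      nlinarith)
    have hdr : (0 : ℝ) ≤ d / |r| := by positivity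
    have hx2 : δ ^ 2 < c ^ 2 * (d / |r|) := by
      have h := pow_lt_pow_left₀ hlt2 hδ0 (by norm_num : (2:ℕ) ≠ 0)
      rwa [mul_pow, Real.sq_sqrt hdr] at h
    have h2 : |r| * δ ^ 2 < c ^ 2 * d := by
      have := mul_lt_mul_of_pos_left hx2 hrpos
      calc |r| * δ ^ 2 < |r| * (c ^ 2 * (d / |r|)) := this
        _ = c ^ 2 * d := by field_simp
    nlinarith [hcore, hlt1, h2, hd0]
  · -- r = 0
    intro hr
    rw [hr] at hcore
    simp only [abs_zero, zero_mul, zero_add] at hcore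
    nlinarith [Real.sq_sqrt (show (0:ℝ) ≤ 2 by norm_num), Real.sqrt_nonneg 2, hd0.le, hcore]
end
end

section
/- Let M = [[a, c], [b, d]] be a 2×2 matrix with entries in K and det M = ad − bc ≠ 0. Suppose α ∈ K satisfies α = (a·p + c·q)/(b·p + d·q) for some coprime integers p, q with b·p + d·q ≠ 0 (i.e., α lies on the image of the extended real line under M). Then there exists an integral ideal 𝔡 of 𝒪 with (det M)·(M)⁻² ⊆ 𝔡 ⊆ 𝒪 (as fractional ideals, i.e., 𝔡 divides (det M)/(M)²) such that the class of the fractional ideal (α, 1) in the class group of K equals the class of (M)·𝔡. -/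
open Complex NumberField ComplexConjugate
open scoped nonZeroDivisors

noncomputable section

section Aux
open FractionalIdeal

lemma FI.le_add_left' {K : Type*} [Field K] [NumberField K]
    (I J : FractionalIdeal (𝓞 K)⁰ K) : I ≤ I + J := by
  rw [← FractionalIdeal.sup_eq_add]; exact le_sup_left

lemma FI.le_add_right' {K : Type*} [Field K] [NumberField K]
    (I J : FractionalIdeal (𝓞 K)⁰ K) : J ≤ I + J := by
  rw [← FractionalIdeal.sup_eq_add]; exact le_sup_right

lemma FI.comb_mem {K : Type*} [Field K] [NumberField K]
    (I : FractionalIdeal (𝓞 K)⁰ K) {x y : K} (hx : x ∈ I) (hy : y ∈ I) (m n : ℤ) :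
    x * (m : K) + y * (n : K) ∈ I := by
  rw [← FractionalIdeal.mem_coe] at hx hy ⊢
  have h1 : m • x ∈ (I : Submodule (𝓞 K) K) := zsmul_mem hx m
  have h2 : n • y ∈ (I : Submodule (𝓞 K) K) := zsmul_mem hy n
  have := Submodule.add_mem _ h1 h2
  simpa [zsmul_eq_mul, mul_comm] using this

lemma FI.classOf_span_mul {K : Type*} [Field K] [NumberField K]
    (u : K) (hu : u ≠ 0) (I : FractionalIdeal (𝓞 K)⁰ K) (hI : I ≠ 0) :
    classOf K (FractionalIdeal.spanSingleton (𝓞 K)⁰ u * I) = classOf K I := by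
  classical
  have hu' : FractionalIdeal.spanSingleton (𝓞 K)⁰ u ≠ 0 :=
    FractionalIdeal.spanSingleton_ne_zero_iff.mpr hu
  have hmul : FractionalIdeal.spanSingleton (𝓞 K)⁰ u * I ≠ 0 := mul_ne_zero hu' hI
  unfold classOf
  rw [dif_neg hmul, dif_neg hI]
  have hunits : Units.mk0 _ hmul = Units.mk0 _ hu' * Units.mk0 I hI := Units.ext rfl
  rw [hunits, _root_.map_mul]
  have h1 : ClassGroup.mk K (Units.mk0 _ hu') = 1 := by
    rw [ClassGroup.mk_eq_one_iff]
    exact ⟨⟨u, FractionalIdeal.coe_spanSingleton _ u⟩⟩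
  rw [h1, one_mul]

end Aux

theorem stmt_14 (K : Type*) [Field K] [NumberField K]
    (hdeg : Module.finrank ℚ K = 2) (him : IsEmpty (K →+* ℝ))
    (a c b d : K) (hdet : a * d - b * c ≠ 0) (α : K) (p q : ℤ)
    (hpq : IsCoprime p q) (hden : b * (p : K) + d * (q : K) ≠ 0)
    (hα : α = (a * (p : K) + c * (q : K)) / (b * (p : K) + d * (q : K))) :
    ∃ 𝔡 : Ideal (𝓞 K),
      FractionalIdeal.spanSingleton (𝓞 K)⁰ (a * d - b * c) * (gen4 K a c b d)⁻¹ *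
          (gen4 K a c b d)⁻¹ ≤ (𝔡 : FractionalIdeal (𝓞 K)⁰ K) ∧
      classOf K (gen2 K α 1) =
        classOf K (gen4 K a c b d * (𝔡 : FractionalIdeal (𝓞 K)⁰ K)) := by
    classical
  set γ : K := a * p + c * q with hγdef
  set β : K := b * p + d * q with hβdef
  set G : FractionalIdeal (𝓞 K)⁰ K := gen4 K a c b d with hGdef
  set J : FractionalIdeal (𝓞 K)⁰ K := gen2 K γ β with hJdef
  have hle : ∀ x : K, FractionalIdeal.spanSingleton (𝓞 K)⁰ x ≤ G → x ∈ G := fun x h =>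
    h (FractionalIdeal.mem_spanSingleton_self _ x)
  have hGun : G = FractionalIdeal.spanSingleton (𝓞 K)⁰ a +
      FractionalIdeal.spanSingleton (𝓞 K)⁰ c + FractionalIdeal.spanSingleton (𝓞 K)⁰ b +
      FractionalIdeal.spanSingleton (𝓞 K)⁰ d := rfl
  have haG : a ∈ G := hle a <| hGun ▸
    (((FI.le_add_left' _ _).trans (FI.le_add_left' _ _)).trans (FI.le_add_left' _ _))
  have hcG : c ∈ G := hle c <| hGun ▸
    (((FI.le_add_right' _ _).trans (FI.le_add_left' _ _)).trans (FI.le_add_left' _ _))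
  have hbG : b ∈ G := hle b <| hGun ▸ ((FI.le_add_right' _ _).trans (FI.le_add_left' _ _))
  have hdG : d ∈ G := hle d <| hGun ▸ (FI.le_add_right' _ _)
  have hγG : γ ∈ G := FI.comb_mem G haG hcG p q
  have hβG : β ∈ G := FI.comb_mem G hbG hdG p q
  have hJun : J = FractionalIdeal.spanSingleton (𝓞 K)⁰ γ +
      FractionalIdeal.spanSingleton (𝓞 K)⁰ β := rfl
  have hγJ : γ ∈ J := (hJun ▸ FI.le_add_left' _ _) (FractionalIdeal.mem_spanSingleton_self _ γ)
  have hβJ : β ∈ J := (hJun ▸ FI.le_add_right' _ _) (FractionalIdeal.mem_spanSingleton_self _ β)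
  have hJleG : J ≤ G := by
    rw [hJun, ← FractionalIdeal.sup_eq_add]
    exact sup_le (FractionalIdeal.spanSingleton_le_iff_mem.mpr hγG)
      (FractionalIdeal.spanSingleton_le_iff_mem.mpr hβG)
  have hGne : G ≠ 0 := by
    intro h
    rw [h] at haG hbG hcG hdG
    rw [FractionalIdeal.mem_zero_iff] at haG hbG hcG hdG
    apply hdet
    rw [haG, hbG]
    ring
  have hGinv : G * G⁻¹ = 1 := mul_inv_cancel₀ hGne
  have hI1 : G⁻¹ * J ≤ 1 := by
    calc G⁻¹ * J ≤ G⁻¹ * G := mul_right_mono (a := G⁻¹) hJleG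
    _ = 1 := by rw [mul_comm]; exact hGinv
  obtain ⟨𝔡, h𝔡⟩ := FractionalIdeal.le_one_iff_exists_coeIdeal.mp hI1
  refine ⟨𝔡, ?_, ?_⟩
  · -- first goal
    obtain ⟨u, v, huv⟩ := hpq
    have hc1 : (u : K) * (p : K) + (v : K) * (q : K) = 1 := by
      have := congrArg (fun t : ℤ => (t : K)) huv
      push_cast at this
      simpa using this
    have hmem : (a * d - b * c) ∈ J * G := by
      rw [← FractionalIdeal.mem_coe, FractionalIdeal.coe_mul]
      have h1 := Submodule.mul_mem_mul (FractionalIdeal.mem_coe.mpr hγJ)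
        (FractionalIdeal.mem_coe.mpr hdG)
      have h2 := Submodule.mul_mem_mul (FractionalIdeal.mem_coe.mpr hβJ)
        (FractionalIdeal.mem_coe.mpr hcG)
      have h3 := Submodule.mul_mem_mul (FractionalIdeal.mem_coe.mpr hβJ)
        (FractionalIdeal.mem_coe.mpr haG)
      have h4 := Submodule.mul_mem_mul (FractionalIdeal.mem_coe.mpr hγJ)
        (FractionalIdeal.mem_coe.mpr hbG)
      have hx := sub_mem h1 h2
      have hy := sub_mem h3 h4
      have hcomb := Submodule.add_mem _ (zsmul_mem hx u) (zsmul_mem hy v)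
      have heq : (a * d - b * c) =
          u • (γ * d - β * c) + v • (β * a - γ * b) := by
        simp only [zsmul_eq_mul, hγdef, hβdef]
        push_cast
        linear_combination (b * c - a * d) * hc1
      rw [heq]
      exact hcomb
    have hdetle : FractionalIdeal.spanSingleton (𝓞 K)⁰ (a * d - b * c) ≤ J * G :=
      FractionalIdeal.spanSingleton_le_iff_mem.mpr hmem
    have key : (G⁻¹ * G⁻¹) * (J * G) = G⁻¹ * J := by
      rw [show (G⁻¹ * G⁻¹) * (J * G) = (G * G⁻¹) * (G⁻¹ * J) by ring, hGinv, one_mul]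
    calc FractionalIdeal.spanSingleton (𝓞 K)⁰ (a * d - b * c) * G⁻¹ * G⁻¹
        = (G⁻¹ * G⁻¹) * FractionalIdeal.spanSingleton (𝓞 K)⁰ (a * d - b * c) := by ring
      _ ≤ (G⁻¹ * G⁻¹) * (J * G) := mul_right_mono (a := G⁻¹ * G⁻¹) hdetle
      _ = G⁻¹ * J := key
      _ = ↑𝔡 := h𝔡.symm
  · -- class group goal
    have hβne : β ≠ 0 := hden
    have hJne : J ≠ 0 := by
      intro h
      rw [h, FractionalIdeal.mem_zero_iff] at hβJ
      exact hβne hβJ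
    have hG𝔡 : G * (𝔡 : FractionalIdeal (𝓞 K)⁰ K) = J := by
      rw [h𝔡, show G * (G⁻¹ * J) = (G * G⁻¹) * J by ring, hGinv, one_mul]
    have hgen2 : gen2 K α 1 = FractionalIdeal.spanSingleton (𝓞 K)⁰ β⁻¹ * J := by
      rw [hJun]
      show FractionalIdeal.spanSingleton (𝓞 K)⁰ α + FractionalIdeal.spanSingleton (𝓞 K)⁰ 1 = _
      rw [mul_add, FractionalIdeal.spanSingleton_mul_spanSingleton,
        FractionalIdeal.spanSingleton_mul_spanSingleton, inv_mul_cancel₀ hβne]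
      congr 2
      rw [hα, div_eq_inv_mul]
    rw [hgen2, hG𝔡]
    exact FI.classOf_span_mul β⁻¹ (inv_ne_zero hβne) J hJne
end
end
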